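/- For fixed angles a, b ∈ ℝ, the function g(x,y) = Re(−i·Log((e^{ia} − (x+iy))/(e^{ib} − (x+iy)))) has gradient at the origin equal to (sin a − sin b, cos b − cos a). -/
import Mathlib


open Complex Real

theorem gradient_of_arg_difference (a b : ℝ) (L : ℂ → ℂ)
    (hL : DifferentiableAt ℂ L (Complex.exp (a * Complex.I) / Complex.exp (b * Complex.I)))
    (hbranch : ∀ᶠ z in nhds (Complex.exp (a * Complex.I) / Complex.exp (b * Complex.I)),
      Complex.exp (L z) = z)
    (g : ℂ → ℝ)
    (hg : ∀ z : ℂ, g z =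
      (-Complex.I * L ((Complex.exp (a * Complex.I) - z) /
        (Complex.exp (b * Complex.I) - z))).re) :
    fderiv ℝ g (0 : ℂ) 1 = Real.sin a - Real.sin b ∧
    fderiv ℝ g (0 : ℂ) Complex.I = Real.cos b - Real.cos a := by
  set ea : ℂ := Complex.exp (a * Complex.I) with hea_def
  set eb : ℂ := Complex.exp (b * Complex.I) with heb_def
  have hea : ea ≠ 0 := Complex.exp_ne_zero _
  have heb : eb ≠ 0 := Complex.exp_ne_zero _
  set w : ℂ := ea / eb with hw
  have hw0 : w ≠ 0 := div_ne_zero hea heb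
  set d := deriv L w with hd
  have hLd : HasDerivAt L d w := hL.hasDerivAt
  have hLw : Complex.exp (L w) = w := hbranch.self_of_nhds
  have hcomp : HasDerivAt (fun z => Complex.exp (L z)) (Complex.exp (L w) * d) w := hLd.cexp
  have hid2 : HasDerivAt (fun z : ℂ => z) (Complex.exp (L w) * d) w :=
    hcomp.congr_of_eventuallyEq (hbranch.mono fun z hz => hz.symm)
  have hwd : w * d = 1 := by
    have := hid2.unique (hasDerivAt_id w)
    rw [hLw] at this
    rw [this]
  have hd_eq : d = w⁻¹ := by
    field_simp at hwd ⊢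
    linear_combination hwd
  -- derivative of F
  have h1 : HasDerivAt (fun z : ℂ => ea - z) (-1) (0 : ℂ) := by
    simpa using (hasDerivAt_id (0 : ℂ)).const_sub ea
  have h2 : HasDerivAt (fun z : ℂ => eb - z) (-1) (0 : ℂ) := by
    simpa using (hasDerivAt_id (0 : ℂ)).const_sub eb
  have heb0 : eb - 0 ≠ 0 := by simpa using heb
  have hF : HasDerivAt (fun z : ℂ => (ea - z) / (eb - z))
      (((-1) * (eb - 0) - (ea - 0) * (-1)) / (eb - 0) ^ 2) (0 : ℂ) := h1.div h2 heb0
  have hF0 : (fun z : ℂ => (ea - z) / (eb - z)) 0 = w := by simp [hw]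
  set c : ℂ := d * (((-1) * (eb - 0) - (ea - 0) * (-1)) / (eb - 0) ^ 2) with hc
  have hh : HasDerivAt (fun z : ℂ => L ((ea - z) / (eb - z))) c 0 := by
    have h := HasDerivAt.comp (0 : ℂ) (hF0 ▸ hLd) hF
    exact h
  have hc_eq : c = Complex.exp (-(b * Complex.I)) - Complex.exp (-(a * Complex.I)) := by
    rw [hc, hd_eq, hw, Complex.exp_neg, Complex.exp_neg, ← hea_def, ← heb_def]
    field_simp
    ring
  set D : ℂ →L[ℝ] ℂ :=
    (ContinuousLinearMap.smulRight (1 : ℂ →L[ℂ] ℂ) c).restrictScalars ℝ with hD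
  have hhF : HasFDerivAt (fun z : ℂ => L ((ea - z) / (eb - z))) D 0 :=
    hh.hasFDerivAt.restrictScalars ℝ
  have hgM : g = fun z => Complex.imCLM ((fun z : ℂ => L ((ea - z) / (eb - z))) z) := by
    funext z
    rw [hg z]
    simp
  have hgF : HasFDerivAt g (Complex.imCLM.comp D) 0 := by
    rw [hgM]
    exact Complex.imCLM.hasFDerivAt.comp 0 hhF
  have hfd : fderiv ℝ g 0 = Complex.imCLM.comp D := hgF.fderiv
  have hMc : ∀ v : ℂ, (Complex.imCLM.comp D) v = (v * c).im := by
    intro v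
    simp [hD]
  have h1b : -(↑b * Complex.I) = (↑(-b) : ℂ) * Complex.I := by push_cast; ring
  have h2a : -(↑a * Complex.I) = (↑(-a) : ℂ) * Complex.I := by push_cast; ring
  have hcre : c.re = Real.cos b - Real.cos a := by
    rw [hc_eq, h1b, h2a, Complex.sub_re, Complex.exp_ofReal_mul_I_re,
      Complex.exp_ofReal_mul_I_re, Real.cos_neg, Real.cos_neg]
  have hcim : c.im = Real.sin a - Real.sin b := by
    rw [hc_eq, h1b, h2a, Complex.sub_im, Complex.exp_ofReal_mul_I_im,
      Complex.exp_ofReal_mul_I_im, Real.sin_neg, Real.sin_neg]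
    ring
  constructor
  · rw [hfd, hMc 1, one_mul, hcim]
  · rw [hfd, hMc Complex.I]
    simp [Complex.mul_im, hcre]
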